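/- Let N be a normal subgroup of a finite group C, let χ be a complex irreducible character of N, and let e_ℚ(χ) be the primitive central idempotent of ℚN associated to χ. Suppose x ∈ C centralizes e_ℚ(χ) and x α x^{-1} = α for every α in the center of ℚN e_ℚ(χ). Then the conjugate character χ^x, defined by χ^x(n) = χ(x n x^{-1}), equals χ. -/

import Mathlib

open scoped Classical
set_option linter.unusedSectionVars false

noncomputable section

namespace PaperGSM

variable {G : Type} [Group G] [Fintype G]

/-- `Ĥ = (1/|N|) ∑_{x ∈ N} x` in the rational group algebra. -/
def hat (N : Subgroup G) : MonoidAlgebra ℚ G :=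
  (Nat.card N : ℚ)⁻¹ • ∑ x : N, MonoidAlgebra.of ℚ G (x : G)

/-- conjugation of `X` by `y`, as an equivalence of the subtype. -/
def conjEquiv (X : Subgroup G) (y : G) (h : ∀ x ∈ X, y⁻¹ * x * y ∈ X)
    (h' : ∀ x ∈ X, y * x * y⁻¹ ∈ X) : X ≃ X where
  toFun x := ⟨y⁻¹ * x * y, h x x.2⟩
  invFun x := ⟨y * x * y⁻¹, h' x x.2⟩
  left_inv x := Subtype.ext (by group)
  right_inv x := Subtype.ext (by group)

lemma sum_conj_eq (X : Subgroup G) (y : G) (h : ∀ x ∈ X, y⁻¹ * x * y ∈ X)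
    (h' : ∀ x ∈ X, y * x * y⁻¹ ∈ X) :
    ∑ x : X, MonoidAlgebra.of ℚ G ((x : G) * y)
      = ∑ x : X, MonoidAlgebra.of ℚ G (y * (x : G)) := by
  apply Fintype.sum_equiv (conjEquiv X y h h')
  intro x
  have : (x : G) * y = y * ((conjEquiv X y h h') x : G) := by
    simp only [conjEquiv, Equiv.coe_fn_mk]
    group
  rw [this]

lemma hat_comm (X Y : Subgroup G) (h : ∀ y ∈ Y, ∀ x ∈ X, y⁻¹ * x * y ∈ X) :
    hat X * hat Y = hat Y * hat X := by
  have key : (∑ x : X, MonoidAlgebra.of ℚ G (x : G)) * (∑ y : Y, MonoidAlgebra.of ℚ G (y : G))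
      = (∑ y : Y, MonoidAlgebra.of ℚ G (y : G)) * (∑ x : X, MonoidAlgebra.of ℚ G (x : G)) := by
    rw [Finset.sum_mul_sum, Finset.sum_mul_sum]
    have l : ∀ (x : X) (y : Y),
        MonoidAlgebra.of ℚ G (x : G) * MonoidAlgebra.of ℚ G (y : G)
          = MonoidAlgebra.of ℚ G ((x : G) * (y : G)) := fun x y => (map_mul _ _ _).symm
    calc ∑ x : X, ∑ y : Y, MonoidAlgebra.of ℚ G (x : G) * MonoidAlgebra.of ℚ G (y : G)
        = ∑ y : Y, ∑ x : X, MonoidAlgebra.of ℚ G ((x : G) * (y : G)) := by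
          rw [Finset.sum_comm]
          exact Finset.sum_congr rfl fun y _ => Finset.sum_congr rfl fun x _ => l x y
      _ = ∑ y : Y, ∑ x : X, MonoidAlgebra.of ℚ G ((y : G) * (x : G)) := by
          refine Finset.sum_congr rfl fun y _ => ?_
          refine sum_conj_eq X (y : G) (fun x hx => h y y.2 x hx) (fun x hx => ?_)
          have := h (y : G)⁻¹ (Y.inv_mem y.2) x hx
          simpa using this
      _ = ∑ y : Y, ∑ x : X, MonoidAlgebra.of ℚ G (y : G) * MonoidAlgebra.of ℚ G (x : G) := by
          exact Finset.sum_congr rfl fun y _ => Finset.sum_congr rfl fun x _ => map_mul (MonoidAlgebra.of ℚ G) _ _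
  unfold hat
  rw [smul_mul_smul_comm, smul_mul_smul_comm, key, mul_comm ((Nat.card X : ℚ)⁻¹)]

instance : Fintype (Subgroup G) :=
  Fintype.ofInjective (fun H : Subgroup G => (H : Set G)) fun _ _ h => SetLike.coe_injective h

/-- `N` is a normal subgroup of `B` (both given as subgroups of the ambient group `G`). -/
def NormalIn (N B : Subgroup G) : Prop :=
  N ≤ B ∧ ∀ b ∈ B, ∀ x ∈ N, b * x * b⁻¹ ∈ N

/-- `L` is a minimal normal subgroup of `H` containing `K` properly. -/
def IsMinNormalOver (H K L : Subgroup G) : Prop :=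
  NormalIn L H ∧ K < L ∧ ∀ M : Subgroup G, NormalIn M H → K < M → M ≤ L → M = L

/-- `ε(H,K)`. -/
def eps (H K : Subgroup G) : MonoidAlgebra ℚ G :=
  if H = K then hat K
  else Finset.noncommProd (Finset.univ.filter (IsMinNormalOver H K))
    (fun L => hat K - hat L) (by
      intro L hL M hM _
      simp only [Finset.coe_filter, Set.mem_setOf_eq, Finset.mem_univ, true_and] at hL hM
      have hKL : K ≤ L := le_of_lt hL.2.1
      have hKH : K ≤ H := hKL.trans hL.1.1
      have normconj : ∀ (A : Subgroup G), NormalIn A H → ∀ y ∈ K, ∀ x ∈ A, y⁻¹ * x * y ∈ A := by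
        intro A hA y hy x hx
        have := hA.2 y⁻¹ (H.inv_mem (hKH hy)) x hx
        simpa using this
      have cKK : Commute (hat K) (hat K) := Commute.refl _
      have cKL : Commute (hat K) (hat L) :=
        (hat_comm L K (normconj L hL.1)).symm
      have cKM : Commute (hat K) (hat M) :=
        (hat_comm M K (normconj M hM.1)).symm
      have cLM : Commute (hat L) (hat M) := by
        refine hat_comm L M ?_
        intro y hy x hx
        have := hL.1.2 y⁻¹ (H.inv_mem (hM.1.1 hy)) x hx
        simpa using this
      exact (cKK.sub_right cKM).sub_left (cKL.symm.sub_right cLM))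

/-- conjugation of an element of the group algebra by a group element. -/
def conjEl (g : G) (α : MonoidAlgebra ℚ G) : MonoidAlgebra ℚ G :=
  MonoidAlgebra.of ℚ G g * α * MonoidAlgebra.of ℚ G g⁻¹

/-- `e(B,H,K)`: the sum of the distinct `B`-conjugates of `ε(H,K)`. -/
def eGHK (B H K : Subgroup G) : MonoidAlgebra ℚ G :=
  ∑ a ∈ Finset.image (fun b : B => conjEl (b : G) (eps H K)) Finset.univ, a


/-- linear extension of a character to the rational group algebra, valued in `ℂ`. -/
def extChar {Γ : Type*} [Group Γ] [Fintype Γ] (χ : Γ → ℂ) (α : MonoidAlgebra ℚ Γ) : ℂ :=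
  ∑ g : Γ, (α.coeff g : ℂ) * χ g

/-- `e` is a primitive central idempotent of the rational group algebra. -/
def IsPCI {Γ : Type*} [Group Γ] (e : MonoidAlgebra ℚ Γ) : Prop :=
  (∀ α, e * α = α * e) ∧ e * e = e ∧ e ≠ 0 ∧
    ∀ a b : MonoidAlgebra ℚ Γ, (∀ α, a * α = α * a) → (∀ α, b * α = α * b) →
      a * a = a → b * b = b → a * b = 0 → a + b = e → a = 0 ∨ b = 0

/-- `e_ℚ(χ)`: the primitive central idempotent of `ℚΓ` associated to the irreducible
character `χ`, i.e. the unique primitive central idempotent on which `χ` does not vanish. -/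
def eQchar {Γ : Type*} [Group Γ] [Fintype Γ] (χ : Γ → ℂ) : MonoidAlgebra ℚ Γ :=
  if h : ∃ e, IsPCI e ∧ extChar χ e ≠ 0 then h.choose else 0

/-- the embedding `ℚB → ℚG` for a subgroup `B` of `G`. -/
def emb (B : Subgroup G) : MonoidAlgebra ℚ B →+* MonoidAlgebra ℚ G :=
  MonoidAlgebra.mapDomainRingHom ℚ B.subtype

/-- the induced character `χ^Γ` of a character `χ` of a subgroup `N` of `Γ`. -/
def indChar {Γ : Type*} [Group Γ] [Fintype Γ] (N : Subgroup Γ) (χ : N → ℂ) : Γ → ℂ :=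
  fun g => (Nat.card N : ℂ)⁻¹ * ∑ x : Γ, if h : x * g * x⁻¹ ∈ N then χ ⟨x * g * x⁻¹, h⟩ else 0

/-- `λ` is a linear character of `H` with kernel `K`. -/
def IsLinCharKer (H K : Subgroup G) (lam : H →* ℂ) : Prop :=
  K ≤ H ∧ ∀ h : H, lam h = 1 ↔ (h : G) ∈ K

/-- given a linear character `lam` of `H ≤ G` and `H ≤ B`, the induced character `λ^B`
of the subgroup `B`. -/
def lamChar {H : Subgroup G} (lam : H →* ℂ) (B : Subgroup G) : B → ℂ :=
  indChar (H.subgroupOf B) (fun y => lam ⟨((y : B) : G), y.2⟩)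

/-- `e_ℚ(λ^B)` viewed as an element of `ℚG`. -/
def eQ {H : Subgroup G} (lam : H →* ℂ) (B : Subgroup G) : MonoidAlgebra ℚ G :=
  emb B (eQchar (lamChar lam B))

/-- `Cen_B(e)`: the centralizer of an element `e` of `ℚG` inside the subgroup `B`. -/
def cen (B : Subgroup G) (e : MonoidAlgebra ℚ G) : Subgroup G where
  carrier := {g | g ∈ B ∧ MonoidAlgebra.of ℚ G g * e = e * MonoidAlgebra.of ℚ G g}
  one_mem' := ⟨B.one_mem, by rw [map_one, one_mul, mul_one]⟩
  mul_mem' := by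
    rintro a b ⟨haB, ha⟩ ⟨hbB, hb⟩
    refine ⟨B.mul_mem haB hbB, ?_⟩
    rw [map_mul, mul_assoc, hb, ← mul_assoc, ha, mul_assoc]
  inv_mem' := by
    rintro a ⟨haB, ha⟩
    refine ⟨B.inv_mem haB, ?_⟩
    have h2 : MonoidAlgebra.of ℚ G a * MonoidAlgebra.of ℚ G a⁻¹ = 1 := by
      rw [← map_mul, mul_inv_cancel, map_one]
    have h1 : MonoidAlgebra.of ℚ G a⁻¹ * MonoidAlgebra.of ℚ G a = 1 := by
      rw [← map_mul, inv_mul_cancel, map_one]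
    have hu : Commute ((Units.mk (MonoidAlgebra.of ℚ G a)
        (MonoidAlgebra.of ℚ G a⁻¹) h2 h1 : (MonoidAlgebra ℚ G)ˣ) : MonoidAlgebra ℚ G) e := ha
    exact hu.units_inv_left

/-- the component `ℚB·e` of the group algebra, as a non-unital subring of `ℚG`. -/
def compIn (B : Subgroup G) (e : MonoidAlgebra ℚ G) : NonUnitalSubring (MonoidAlgebra ℚ G) :=
  NonUnitalSubring.closure (Set.range fun β : MonoidAlgebra ℚ B => emb B β * e)

/-- the center of the component `ℚB·e`, as a non-unital subring of `ℚG`. -/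
def centerCompNUS (B : Subgroup G) (e : MonoidAlgebra ℚ G) :
    NonUnitalSubring (MonoidAlgebra ℚ G) where
  carrier := {α | α ∈ compIn B e ∧ ∀ γ ∈ compIn B e, α * γ = γ * α}
  zero_mem' := ⟨zero_mem _, fun γ _ => by rw [zero_mul, mul_zero]⟩
  add_mem' := by
    rintro a b ⟨ha, ha'⟩ ⟨hb, hb'⟩
    exact ⟨add_mem ha hb, fun γ hγ => by rw [add_mul, mul_add, ha' γ hγ, hb' γ hγ]⟩
  neg_mem' := by
    rintro a ⟨ha, ha'⟩
    exact ⟨neg_mem ha, fun γ hγ => by rw [neg_mul, mul_neg, ha' γ hγ]⟩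
  mul_mem' := by
    rintro a b ⟨ha, ha'⟩ ⟨hb, hb'⟩
    refine ⟨mul_mem ha hb, fun γ hγ => ?_⟩
    rw [mul_assoc, hb' γ hγ, ← mul_assoc, ha' γ hγ, mul_assoc]

lemma conjEl_add (g : G) (α β : MonoidAlgebra ℚ G) :
    conjEl g (α + β) = conjEl g α + conjEl g β := by
  unfold conjEl; rw [mul_add, add_mul]

lemma conjEl_mul (g : G) (α β : MonoidAlgebra ℚ G) :
    conjEl g (α * β) = conjEl g α * conjEl g β := by
  unfold conjEl
  have h1 : MonoidAlgebra.of ℚ G g⁻¹ * MonoidAlgebra.of ℚ G g = 1 := by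
    rw [← map_mul, inv_mul_cancel, map_one]
  calc MonoidAlgebra.of ℚ G g * (α * β) * MonoidAlgebra.of ℚ G g⁻¹
      = MonoidAlgebra.of ℚ G g * α * ((MonoidAlgebra.of ℚ G g⁻¹ * MonoidAlgebra.of ℚ G g) *
        (β * MonoidAlgebra.of ℚ G g⁻¹)) := by rw [h1]; noncomm_ring
    _ = MonoidAlgebra.of ℚ G g * α * MonoidAlgebra.of ℚ G g⁻¹ *
        (MonoidAlgebra.of ℚ G g * β * MonoidAlgebra.of ℚ G g⁻¹) := by noncomm_ring

/-- the fixed points of the conjugation action of (members of) `C` on the center of the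
component `ℚB·e`, as a non-unital subring of `ℚG`. -/
def fixedCenter (B : Subgroup G) (e : MonoidAlgebra ℚ G) (C : Subgroup G) :
    NonUnitalSubring (MonoidAlgebra ℚ G) where
  carrier := {α | α ∈ centerCompNUS B e ∧ ∀ x ∈ C, conjEl x α = α}
  zero_mem' := ⟨zero_mem _, fun x _ => by unfold conjEl; rw [mul_zero, zero_mul]⟩
  add_mem' := by
    rintro a b ⟨ha, ha'⟩ ⟨hb, hb'⟩
    exact ⟨add_mem ha hb, fun x hx => by rw [conjEl_add, ha' x hx, hb' x hx]⟩
  neg_mem' := by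
    rintro a ⟨ha, ha'⟩
    refine ⟨neg_mem ha, fun x hx => ?_⟩
    have : conjEl x (-a) = - conjEl x a := by unfold conjEl; rw [mul_neg, neg_mul]
    rw [this, ha' x hx]
  mul_mem' := by
    rintro a b ⟨ha, ha'⟩ ⟨hb, hb'⟩
    exact ⟨mul_mem ha hb, fun x hx => by rw [conjEl_mul, ha' x hx, hb' x hx]⟩

/-- `(H,K)` is a Shoda pair of `G`. -/
def IsShodaPair (H K : Subgroup G) : Prop :=
  K ≤ H ∧ (∀ h ∈ H, ∀ x ∈ K, h * x * h⁻¹ ∈ K) ∧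
    (∃ h ∈ H, ∀ x ∈ H, ∃ n : ℤ, (h ^ n)⁻¹ * x ∈ K) ∧
    ∀ g : G, (∀ h ∈ H, h⁻¹ * g⁻¹ * h * g ∈ H → h⁻¹ * g⁻¹ * h * g ∈ K) → g ∈ H

/-- `c` is a strong inductive chain from `H` to `G` (with respect to the linear
character `lam` of `H`). -/
def IsStrongInductiveChain (H : Subgroup G) (lam : H →* ℂ) {n : ℕ}
    (c : Fin (n + 1) → Subgroup G) : Prop :=
  c 0 = H ∧ c (Fin.last n) = ⊤ ∧ Monotone c ∧
    ∀ i : Fin n,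
      NormalIn (c i.castSucc) (cen (c i.succ) (eQ lam (c i.castSucc))) ∧
      ∀ x ∈ c i.succ, ∀ y ∈ c i.succ,
        conjEl x (eQ lam (c i.castSucc)) ≠ conjEl y (eQ lam (c i.castSucc)) →
        conjEl x (eQ lam (c i.castSucc)) * conjEl y (eQ lam (c i.castSucc)) = 0

/-- `(H,K)` is a generalized strong Shoda pair of `G`, witnessed by the linear character
`lam` of `H` with kernel `K`. -/
def IsGSSPwith (H K : Subgroup G) (lam : H →* ℂ) : Prop :=
  IsShodaPair H K ∧ IsLinCharKer H K lam ∧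
    ∃ (n : ℕ) (c : Fin (n + 1) → Subgroup G), IsStrongInductiveChain H lam c

/-- `(H,K)` is a generalized strong Shoda pair of `G`. -/
def IsGSSP (H K : Subgroup G) : Prop :=
  ∃ lam : H →* ℂ, IsGSSPwith H K lam

/-- `χ` is an irreducible (complex) character of `Γ`. -/
def IsIrrChar (Γ : Type) [Group Γ] (χ : Γ → ℂ) : Prop :=
  ∃ V : FDRep ℂ Γ, CategoryTheory.Simple V ∧ V.character = χ

/-- `Γ` is a monomial group. -/
def IsMonomialGroup (Γ : Type) [Group Γ] [Fintype Γ] : Prop :=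
  ∀ χ : Γ → ℂ, IsIrrChar Γ χ →
    ∃ (N : Subgroup Γ) (lam : N →* ℂ), χ = indChar N fun h => lam h

/-- `G` is a generalized strongly monomial group. -/
def IsGenStronglyMonomial (G : Type) [Group G] [Fintype G] : Prop :=
  ∀ χ : G → ℂ, IsIrrChar G χ →
    ∃ (H K : Subgroup G) (lam : H →* ℂ), IsGSSPwith H K lam ∧
      χ = indChar H fun h => lam h

/-- `A` is a subnormal subgroup of `G`. -/
def Subnormal (A : Subgroup G) : Prop :=
  ∃ (n : ℕ) (c : Fin (n + 1) → Subgroup G), c 0 = A ∧ c (Fin.last n) = ⊤ ∧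
    ∀ i : Fin n, NormalIn (c i.castSucc) (c i.succ)

/-- the Bass unit (Bass cyclic unit) `u_{k,m}(g)`, written in `ℚG` (it has integral
coefficients when `k^m ≡ 1 mod |g|`). -/
def bassQ (g : G) (k m : ℕ) : MonoidAlgebra ℚ G :=
  (∑ i ∈ Finset.range k, MonoidAlgebra.of ℚ G g ^ i) ^ m +
    (((1 : ℚ) - (k : ℚ) ^ m) / (orderOf g : ℚ)) •
      ∑ i ∈ Finset.range (orderOf g), MonoidAlgebra.of ℚ G g ^ i

/-- the integral group ring `ℤB`, as a subring of `ℚG`. -/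
def intRing (B : Subgroup G) : Subring (MonoidAlgebra ℚ G) :=
  Subring.closure (Set.range fun b : B => MonoidAlgebra.of ℚ G (b : G))

/-- `α` is a unit of the integral group ring `ℤB`. -/
def IsUnitOfZ (B : Subgroup G) (α : MonoidAlgebra ℚ G) : Prop :=
  α ∈ intRing B ∧ ∃ β ∈ intRing B, α * β = 1 ∧ β * α = 1

/-- `Z(U(ℤB))`: the group of central units of `ℤB`, as a subgroup of `(ℚG)ˣ`. -/
def centralZUnits (B : Subgroup G) : Subgroup (MonoidAlgebra ℚ G)ˣ where
  carrier := {u | (u : MonoidAlgebra ℚ G) ∈ intRing B ∧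
    ((u⁻¹ : (MonoidAlgebra ℚ G)ˣ) : MonoidAlgebra ℚ G) ∈ intRing B ∧
    ∀ x ∈ intRing B, (u : MonoidAlgebra ℚ G) * x = x * u}
  one_mem' := ⟨one_mem _, by rw [inv_one]; exact ⟨one_mem _, fun x _ => by rw [Units.val_one, one_mul, mul_one]⟩⟩
  mul_mem' := by
    rintro a b ⟨ha1, ha2, ha3⟩ ⟨hb1, hb2, hb3⟩
    refine ⟨by rw [Units.val_mul]; exact mul_mem ha1 hb1, ?_, ?_⟩
    · rw [mul_inv_rev, Units.val_mul]; exact mul_mem hb2 ha2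
    · intro x hx
      rw [Units.val_mul, mul_assoc, hb3 x hx, ← mul_assoc, ha3 x hx, mul_assoc]
  inv_mem' := by
    rintro a ⟨ha1, ha2, ha3⟩
    refine ⟨ha2, by rw [inv_inv]; exact ha1, fun x hx => ?_⟩
    exact Commute.units_inv_left (ha3 x hx)

/-- the element `1 - M̂ + u_{k,m}(g)·M̂` of `ℚG`. -/
def genBassElt (M : Subgroup G) (g : G) (k m : ℕ) : MonoidAlgebra ℚ G :=
  1 - hat M + bassQ g k m * hat M

/-- `u` is a generalized Bass unit of `ℤB` based on some `g ∈ B` and the subgroup `M`: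
it is the minimal positive power of `1 - M̂ + u_{k,m}(g)·M̂` which is a unit of `ℤB`. -/
def IsGenBassUnitOf (B M : Subgroup G) (u : (MonoidAlgebra ℚ G)ˣ) : Prop :=
  ∃ g ∈ B, ∃ k m nn : ℕ, 0 < k ∧ 0 < m ∧ 0 < nn ∧ k ^ m ≡ 1 [MOD orderOf g] ∧
    (u : MonoidAlgebra ℚ G) = genBassElt M g k m ^ nn ∧
    IsUnitOfZ B (u : MonoidAlgebra ℚ G) ∧
    ∀ j : ℕ, 0 < j → j < nn → ¬ IsUnitOfZ B (genBassElt M g k m ^ j)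

/-- `u` is a Bass unit of `ℤG`. -/
def IsBassUnit (u : (MonoidAlgebra ℚ G)ˣ) : Prop :=
  ∃ (g : G) (k m : ℕ), 0 < k ∧ 0 < m ∧ k ^ m ≡ 1 [MOD orderOf g] ∧
    (u : MonoidAlgebra ℚ G) = bassQ g k m

/-- a (finitely generated) group `M` has (torsion-free) rank `r` iff it contains a free
abelian subgroup of rank `r` of finite index. -/
def HasRank (M : Type*) [Group M] (r : ℕ) : Prop :=
  ∃ f : Multiplicative (Fin r → ℤ) →* M, Function.Injective f ∧ f.range.index ≠ 0

/-- `(H,K)` realizes the primitive central idempotent `e` of `ℚG`. -/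
def RealizesIdem (H K : Subgroup G) (e : MonoidAlgebra ℚ G) : Prop :=
  ∃ lam : H →* ℂ, IsLinCharKer H K lam ∧ eQ lam ⊤ = e

/-- two pairs of subgroups realize the same primitive central idempotent of `ℚG`. -/
def SameIdem (p q : Subgroup G × Subgroup G) : Prop :=
  ∃ e, RealizesIdem p.1 p.2 e ∧ RealizesIdem q.1 q.2 e

/-- `S` is a complete and irredundant set of generalized strong Shoda pairs of `G`. -/
def IsCompleteIrredundantGSSP (S : Finset (Subgroup G × Subgroup G)) : Prop :=
  (∀ p ∈ S, IsGSSP p.1 p.2) ∧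
  (∀ H K : Subgroup G, IsGSSP H K → ∃ q ∈ S, SameIdem (H, K) q) ∧
  (∀ p ∈ S, ∀ q ∈ S, SameIdem p q → p = q)

/-- the center of the component `ℚG·e` is a totally real field: every embedding of it
into `ℂ` has real image. -/
def IsTotallyRealCenter (B : Subgroup G) (e : MonoidAlgebra ℚ G) : Prop :=
  ∀ f : centerCompNUS B e →ₙ+* ℂ, f ≠ 0 → ∀ α, (f α).im = 0

/-- `T` is a right transversal of `C` in `B`. -/
def IsRightTransversal (C B : Subgroup G) (T : Finset G) : Prop :=
  (T : Set G) ⊆ (B : Set G) ∧ ∀ b ∈ B, ∃! t, t ∈ T ∧ b * t⁻¹ ∈ C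

/-- `x^g = g⁻¹ x g`. -/
def zconj (g : G) (α : MonoidAlgebra ℚ G) : MonoidAlgebra ℚ G :=
  MonoidAlgebra.of ℚ G g⁻¹ * α * MonoidAlgebra.of ℚ G g

/-- `∏_{c ∈ C} α^c`. -/
def innerProd (C : Subgroup G) (α : MonoidAlgebra ℚ G) : MonoidAlgebra ℚ G :=
  ((Finset.univ : Finset C).toList.map fun c => zconj (c : G) α).prod

/-- `∏_{t ∈ T} α^t`. -/
def outerProd (T : Finset G) (α : MonoidAlgebra ℚ G) : MonoidAlgebra ℚ G :=
  (T.toList.map fun t => zconj t α).prod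

/-- the iterated construction `z^{N}(u)` along a list of pairs (centralizer, transversal). -/
def zIterAux : List (Subgroup G × Finset G) → MonoidAlgebra ℚ G → MonoidAlgebra ℚ G
  | [], α => α
  | p :: rest, α => zIterAux rest (outerProd p.2 (innerProd p.1 α))

/-- the iterated construction `c^{N}(u)` along a list of transversals. -/
def cIterAux : List (Finset G) → MonoidAlgebra ℚ G → MonoidAlgebra ℚ G
  | [], α => α
  | T :: rest, α => cIterAux rest (outerProd T α)


/- ===================== auxiliary development ===================== -/

section PrimDecomp

open Module

variable {W : Type} [CommRing W] [Algebra ℚ W]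

/-- a primitive idempotent of a commutative ring. -/
def IsPrimIdem (p : W) : Prop :=
  IsIdempotentElem p ∧ p ≠ 0 ∧ ∀ a b : W, IsIdempotentElem a → IsIdempotentElem b →
    a * b = 0 → a + b = p → a = 0 ∨ b = 0

lemma exists_prim_decomp [FiniteDimensional ℚ W] (n : ℕ) :
    ∀ e : W, IsIdempotentElem e → e ≠ 0 →
    Module.finrank ℚ (Submodule.restrictScalars ℚ (Ideal.span {e})) ≤ n →
    ∃ (k : ℕ) (p : Fin k → W), (∀ i, IsPrimIdem (p i)) ∧ (∀ i, p i * e = p i) ∧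
      (∀ i j : Fin k, i ≠ j → p i * p j = 0) ∧ ∑ i, p i = e := by
  induction n with
  | zero =>
    intro e he hne hrank
    exfalso
    have h0 : Module.finrank ℚ (Submodule.restrictScalars ℚ (Ideal.span ({e} : Set W))) = 0 :=
      Nat.le_zero.mp hrank
    have hsub : Subsingleton (Submodule.restrictScalars ℚ (Ideal.span ({e} : Set W))) :=
      Module.finrank_zero_iff.mp h0
    have hmem : e ∈ Submodule.restrictScalars ℚ (Ideal.span ({e} : Set W)) :=
      Ideal.mem_span_singleton_self e
    have : (⟨e, hmem⟩ : Submodule.restrictScalars ℚ (Ideal.span ({e} : Set W))) =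
        ⟨0, zero_mem _⟩ := Subsingleton.elim _ _
    exact hne (congrArg Subtype.val this)
  | succ n ih =>
    intro e he hne hrank
    by_cases hprim : ∀ a b : W, IsIdempotentElem a → IsIdempotentElem b →
        a * b = 0 → a + b = e → a = 0 ∨ b = 0
    · exact ⟨1, fun _ => e, fun _ => ⟨he, hne, hprim⟩, fun _ => he,
        fun i j hij => absurd (Subsingleton.elim i j) hij, by simp⟩
    · push_neg at hprim
      obtain ⟨a, b, ha, hb, hab, habe, ha0, hb0⟩ := hprim
      have hae : a * e = a := by rw [← habe, mul_add, ha, hab, add_zero]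
      have hbe : b * e = b := by
        rw [← habe, mul_add, mul_comm b a, hab, hb, zero_add]
      have key : ∀ c d : W, IsIdempotentElem c → IsIdempotentElem d → c * d = 0 →
          c + d = e → d ≠ 0 →
          Module.finrank ℚ (Submodule.restrictScalars ℚ (Ideal.span {c})) ≤ n := by
        intro c d hc hd hcd hcde hd0
        have hce : c * e = c := by rw [← hcde, mul_add, hc, hcd, add_zero]
        have hlt : Ideal.span ({c} : Set W) < Ideal.span ({e} : Set W) := by
          refine lt_of_le_of_ne
            (Ideal.span_singleton_le_span_singleton.mpr ⟨c, by rw [mul_comm]; exact hce.symm⟩) ?_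
          intro heq
          have hmem : e ∈ Ideal.span ({c} : Set W) :=
            heq ▸ Ideal.mem_span_singleton_self e
          obtain ⟨w, hw⟩ := Ideal.mem_span_singleton.mp hmem
          have hdc : d * e = d := by
            rw [← hcde, mul_add, mul_comm d c, hcd, hd, zero_add]
          have : d = 0 := by
            rw [← hdc, hw, ← mul_assoc, mul_comm d c, hcd, zero_mul]
          exact hd0 this
        have hlt' : Submodule.restrictScalars ℚ (Ideal.span ({c} : Set W)) <
            Submodule.restrictScalars ℚ (Ideal.span ({e} : Set W)) := by
          refine lt_of_le_of_ne (fun y hy => hlt.le hy) (fun hh => hlt.ne ?_)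
          exact Submodule.restrictScalars_injective ℚ _ _ hh
        have := Submodule.finrank_lt_finrank_of_lt hlt'
        omega
      obtain ⟨k₁, p, hp, hpa, hporth, hpsum⟩ :=
        ih a ha ha0 (key a b ha hb hab habe hb0)
      obtain ⟨k₂, q, hq, hqb, hqorth, hqsum⟩ :=
        ih b hb hb0 (key b a hb ha (by rw [mul_comm]; exact hab) (by rw [add_comm]; exact habe) ha0)
      refine ⟨k₁ + k₂, Fin.append p q, ?_, ?_, ?_, ?_⟩
      · intro i
        refine Fin.addCases (fun j => ?_) (fun j => ?_) i
        · rw [Fin.append_left]; exact hp j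
        · rw [Fin.append_right]; exact hq j
      · intro i
        refine Fin.addCases (fun j => ?_) (fun j => ?_) i
        · rw [Fin.append_left, ← hpa j, mul_assoc, hae]
        · rw [Fin.append_right, ← hqb j, mul_assoc, hbe]
      · intro i j
        refine Fin.addCases (fun i' => ?_) (fun i' => ?_) i <;>
          refine Fin.addCases (fun j' => ?_) (fun j' => ?_) j <;> intro hij
        · rw [Fin.append_left, Fin.append_left]
          refine hporth i' j' (fun hh => hij ?_)
          rw [hh]
        · rw [Fin.append_left, Fin.append_right]
          calc p i' * q j' = (p i' * a) * (q j' * b) := by rw [hpa i', hqb j']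
            _ = (p i' * q j') * (a * b) := by ring
            _ = 0 := by rw [hab, mul_zero]
        · rw [Fin.append_right, Fin.append_left]
          calc q i' * p j' = (q i' * b) * (p j' * a) := by rw [hpa j', hqb i']
            _ = (q i' * p j') * (a * b) := by ring
            _ = 0 := by rw [hab, mul_zero]
        · rw [Fin.append_right, Fin.append_right]
          refine hqorth i' j' (fun hh => hij ?_)
          rw [hh]
      · rw [Fin.sum_univ_add]
        simp only [Fin.append_left, Fin.append_right]
        rw [hpsum, hqsum, habe]

end PrimDecomp

section RepMachinery

open Module CategoryTheory

variable {Γ : Type} [Group Γ] [Fintype Γ]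

instance monoidAlgebraFinite : Module.Finite ℚ (MonoidAlgebra ℚ Γ) :=
  Module.Finite.equiv ((Finsupp.linearEquivFunOnFinite ℚ ℚ Γ).symm.trans (MonoidAlgebra.coeffLinearEquiv ℚ).symm)

lemma finsupp_eq_sum_single (β : MonoidAlgebra ℚ Γ) :
    β = ∑ g : Γ, MonoidAlgebra.single g (β.coeff g) := by
  ext a
  rw [MonoidAlgebra.coeff_sum, Finsupp.finset_sum_apply]
  simp [MonoidAlgebra.coeff_single, Finsupp.single_apply]

lemma extChar_of (χ : Γ → ℂ) (a : Γ) : extChar χ (MonoidAlgebra.of ℚ Γ a) = χ a := by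
  unfold extChar
  rw [Finset.sum_eq_single a]
  · simp [MonoidAlgebra.of_apply, MonoidAlgebra.coeff_single, Finsupp.single_eq_same]
  · intro g _ hga
    rw [MonoidAlgebra.of_apply, MonoidAlgebra.coeff_single, Finsupp.single_eq_of_ne hga]
    simp
  · intro h
    exact absurd (Finset.mem_univ a) h

lemma extChar_sum {ι : Type*} (χ : Γ → ℂ) (s : Finset ι) (f : ι → MonoidAlgebra ℚ Γ) :
    extChar χ (∑ i ∈ s, f i) = ∑ i ∈ s, extChar χ (f i) := by
  unfold extChar
  rw [Finset.sum_comm]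
  refine Finset.sum_congr rfl fun g _ => ?_
  rw [MonoidAlgebra.coeff_sum, Finsupp.finset_sum_apply, Rat.cast_sum, Finset.sum_mul]

/-- the canonical map `ℚΓ → ℂΓ`. -/
noncomputable def coeffMap : MonoidAlgebra ℚ Γ →ₐ[ℚ] MonoidAlgebra ℂ Γ :=
  MonoidAlgebra.lift ℚ (MonoidAlgebra ℂ Γ) Γ (MonoidAlgebra.of ℂ Γ)

/-- the action of `ℚΓ` on a complex representation `V`. -/
noncomputable def piRep (V : FDRep ℂ Γ) : MonoidAlgebra ℚ Γ →+* Module.End ℂ V :=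
  (Representation.asAlgebraHom V.ρ).toRingHom.comp (coeffMap (Γ := Γ)).toRingHom

lemma coeffMap_of (g : Γ) :
    coeffMap (Γ := Γ) (MonoidAlgebra.of ℚ Γ g) = MonoidAlgebra.of ℂ Γ g :=
  MonoidAlgebra.lift_of _ g

lemma piRep_of (V : FDRep ℂ Γ) (g : Γ) : piRep V (MonoidAlgebra.of ℚ Γ g) = V.ρ g := by
  simp only [piRep, RingHom.comp_apply, AlgHom.toRingHom_eq_coe, RingHom.coe_coe]
  rw [coeffMap_of, Representation.asAlgebraHom_of]

lemma piRep_single (V : FDRep ℂ Γ) (g : Γ) (q : ℚ) :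
    piRep V (MonoidAlgebra.single g q) = (q : ℂ) • V.ρ g := by
  have h1 : (MonoidAlgebra.single g q : MonoidAlgebra ℚ Γ) =
      algebraMap ℚ (MonoidAlgebra ℚ Γ) q * MonoidAlgebra.of ℚ Γ g := by
    rw [MonoidAlgebra.coe_algebraMap]
    show MonoidAlgebra.single g q = MonoidAlgebra.single 1 (algebraMap ℚ ℚ q) * MonoidAlgebra.single g 1
    rw [MonoidAlgebra.single_mul_single, one_mul]
    norm_num
  rw [h1, map_mul, piRep_of]
  have h2 : piRep V (algebraMap ℚ (MonoidAlgebra ℚ Γ) q) = algebraMap ℂ (Module.End ℂ V) (q : ℂ) := by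
    simp only [piRep, RingHom.comp_apply, AlgHom.toRingHom_eq_coe, RingHom.coe_coe]
    rw [AlgHom.commutes, IsScalarTower.algebraMap_apply ℚ ℂ (MonoidAlgebra ℂ Γ),
      eq_ratCast (algebraMap ℚ ℂ), AlgHom.commutes]
  rw [h2, ← Algebra.smul_def]

lemma trace_piRep (V : FDRep ℂ Γ) (β : MonoidAlgebra ℚ Γ) :
    LinearMap.trace ℂ V (piRep V β) = extChar V.character β := by
  conv_lhs => rw [finsupp_eq_sum_single β]
  rw [map_sum, map_sum]
  unfold extChar
  refine Finset.sum_congr rfl fun g _ => ?_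
  rw [piRep_single, map_smul, smul_eq_mul]
  rfl

lemma simple_finrank_pos (V : FDRep ℂ Γ) [CategoryTheory.Simple V] : 0 < finrank ℂ V := by
  by_contra hzero
  push_neg at hzero
  have h0 : finrank ℂ V = 0 := Nat.le_zero.mp hzero
  have hsub : Subsingleton V := (Module.finrank_zero_iff (R := ℂ) (M := V)).mp h0
  have : (𝟙 V : V ⟶ V) = 0 := by
    apply Action.Hom.ext
    ext v
    exact @Subsingleton.elim _ hsub _ _
  exact CategoryTheory.id_nonzero V this

lemma exists_pci (χ : Γ → ℂ) (hχ : IsIrrChar Γ χ) :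
    ∃ e, IsPCI e ∧ extChar χ e ≠ 0 := by
  obtain ⟨V, hsimp, hchar⟩ := hχ
  haveI := hsimp
  set R := MonoidAlgebra ℚ Γ with hR
  have hone : (1 : Subalgebra.center ℚ R) ≠ 0 := by
    intro h
    have := congrArg (Subtype.val) h
    exact one_ne_zero this
  obtain ⟨k, p, hp, -, -, hpsum⟩ :=
    exists_prim_decomp (W := Subalgebra.center ℚ R)
      (Module.finrank ℚ (Submodule.restrictScalars ℚ (Ideal.span {(1 : Subalgebra.center ℚ R)})))
      1 IsIdempotentElem.one hone le_rfl
  have hPCI : ∀ i, IsPCI ((p i : Subalgebra.center ℚ R) : R) := by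
    intro i
    obtain ⟨hidem, hne, hprim⟩ := hp i
    refine ⟨fun α => (Subalgebra.mem_center_iff.mp (p i).2 α).symm, ?_, ?_, ?_⟩
    · exact_mod_cast congrArg Subtype.val hidem
    · intro h
      exact hne (Subtype.ext h)
    · intro a b hac hbc haidem hbidem hab habs
      have haW : a ∈ Subalgebra.center ℚ R :=
        Subalgebra.mem_center_iff.mpr fun z => (hac z).symm
      have hbW : b ∈ Subalgebra.center ℚ R :=
        Subalgebra.mem_center_iff.mpr fun z => (hbc z).symm
      rcases hprim ⟨a, haW⟩ ⟨b, hbW⟩ (Subtype.ext haidem) (Subtype.ext hbidem)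
        (Subtype.ext hab) (Subtype.ext habs) with h | h
      · exact Or.inl (congrArg Subtype.val h)
      · exact Or.inr (congrArg Subtype.val h)
  have hsumR : ∑ i, ((p i : Subalgebra.center ℚ R) : R) = 1 := by
    have := congrArg (Subtype.val) hpsum
    simpa using this
  have hone' : extChar χ (1 : R) ≠ 0 := by
    have h1 : (1 : R) = MonoidAlgebra.of ℚ Γ 1 := by rw [map_one]
    rw [h1, extChar_of, ← hchar, FDRep.char_one]
    exact_mod_cast (simple_finrank_pos V).ne'
  rw [← hsumR, extChar_sum] at hone'
  obtain ⟨i, -, hi⟩ := Finset.exists_ne_zero_of_sum_ne_zero hone'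
  exact ⟨_, hPCI i, hi⟩

lemma eQchar_spec (χ : Γ → ℂ) (hχ : IsIrrChar Γ χ) :
    IsPCI (eQchar χ) ∧ extChar χ (eQchar χ) ≠ 0 := by
  have hex : ∃ e, IsPCI e ∧ extChar χ e ≠ 0 := exists_pci χ hχ
  have h : eQchar χ = hex.choose := by rw [eQchar, dif_pos hex]
  rw [h]
  exact hex.choose_spec

lemma extChar_mul_eQchar (χ : Γ → ℂ) (hχ : IsIrrChar Γ χ) (β : MonoidAlgebra ℚ Γ) :
    extChar χ (β * eQchar χ) = extChar χ β := by
  obtain ⟨hPCI, hne⟩ := eQchar_spec χ hχ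
  obtain ⟨V, hsimp, hchar⟩ := hχ
  haveI := hsimp
  subst hchar
  set e := eQchar V.character with hedef
  set f := piRep V e with hfdef
  have hcomm : ∀ g : Γ, f ∘ₗ V.ρ g = V.ρ g ∘ₗ f := by
    intro g
    have := congrArg (piRep V) (hPCI.1 (MonoidAlgebra.of ℚ Γ g))
    rw [map_mul, map_mul, piRep_of] at this
    exact this
  let hAct : V ⟶ V := ⟨⟨ModuleCat.ofHom f⟩, fun g => by
    ext v
    show f (V.ρ g v) = V.ρ g (f v)
    exact congrFun (congrArg DFunLike.coe (hcomm g)) v⟩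
  obtain ⟨c, hc⟩ := CategoryTheory.endomorphism_simple_eq_smul_id ℂ hAct
  have hf : f = c • (LinearMap.id : V →ₗ[ℂ] V) :=
    (congrArg (fun φ : V ⟶ V => φ.hom.hom.hom) hc).symm
  have htr : LinearMap.trace ℂ V f ≠ 0 := by
    rw [hfdef, trace_piRep]
    exact hne
  have hd : (finrank ℂ V : ℂ) ≠ 0 := by
    exact_mod_cast (simple_finrank_pos V).ne'
  have htrf : LinearMap.trace ℂ V f = c * (finrank ℂ V : ℂ) := by
    rw [hf, map_smul, smul_eq_mul]
    congr 1
    exact LinearMap.trace_one ℂ V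
  have hc0 : c ≠ 0 := by
    intro h0
    rw [htrf, h0, zero_mul] at htr
    exact htr rfl
  have hidem : f * f = f := by
    rw [hfdef, ← map_mul, hPCI.2.1]
  have hcc : c * c = c := by
    have := congrArg (LinearMap.trace ℂ V) hidem
    rw [hf] at this
    rw [show ((c • (LinearMap.id : V →ₗ[ℂ] V)) * (c • LinearMap.id)) = (c * c) • (LinearMap.id : V →ₗ[ℂ] V)
      from by rw [smul_mul_smul_comm]; congr 1] at this
    rw [map_smul, map_smul, smul_eq_mul, smul_eq_mul] at this
    exact mul_right_cancel₀ (by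
      intro hz
      rw [show ((LinearMap.trace ℂ V) LinearMap.id) = ((finrank ℂ V : ℂ)) from LinearMap.trace_one ℂ V] at hz
      exact hd hz) this
  have hc1 : c = 1 := by
    have := mul_left_cancel₀ hc0 (hcc.trans (mul_one c).symm)
    exact this
  have hfone : f = 1 := by
    rw [hf, hc1, one_smul]
    rfl
  rw [← trace_piRep, ← trace_piRep, map_mul, ← hfdef, hfone, mul_one]

end RepMachinery

section MainAux

variable {Γ : Type} [Group Γ] [Fintype Γ]

lemma central_of_comm_of (z : MonoidAlgebra ℚ Γ)
    (h : ∀ g : Γ, z * MonoidAlgebra.of ℚ Γ g = MonoidAlgebra.of ℚ Γ g * z) :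
    ∀ α, z * α = α * z := by
  intro α
  conv_lhs => rw [finsupp_eq_sum_single α]
  conv_rhs => rw [finsupp_eq_sum_single α]
  rw [Finset.mul_sum, Finset.sum_mul]
  refine Finset.sum_congr rfl fun g _ => ?_
  have hs : (MonoidAlgebra.single g (α.coeff g) : MonoidAlgebra ℚ Γ) = α.coeff g • MonoidAlgebra.of ℚ Γ g := by
    rw [MonoidAlgebra.of_apply, MonoidAlgebra.smul_single, smul_eq_mul, mul_one]
  rw [hs, mul_smul_comm, smul_mul_assoc, h g]

end MainAux


/-- If `N ⊴ C`, `χ` is an irreducible character of `N`, and `x ∈ C`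
centralizes `e_ℚ(χ)` and fixes the center of `ℚN e_ℚ(χ)` pointwise under conjugation,
then `χ^x = χ`. -/
theorem conj_char_eq_of_fixing_center
    (C : Type) [Group C] [Fintype C] (N : Subgroup C) (hN : N.Normal)
    (χ : N → ℂ) (hχ : IsIrrChar N χ) (x : C)
    (hx : MonoidAlgebra.of ℚ C x * emb N (eQchar χ) =
      emb N (eQchar χ) * MonoidAlgebra.of ℚ C x)
    (hfix : ∀ α ∈ centerCompNUS N (emb N (eQchar χ)), conjEl x α = α) :
    ∀ nn : N, χ ⟨x * ↑nn * x⁻¹, hN.conj_mem ↑nn nn.2 x⟩ = χ nn := by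
  intro nn
  have hmulE : ∀ β, extChar χ (β * eQchar χ) = extChar χ β := extChar_mul_eQchar χ hχ
  obtain ⟨hPCI, -⟩ := eQchar_spec χ hχ
  set e := eQchar χ with he
  set m : N := ⟨x * ↑nn * x⁻¹, hN.conj_mem ↑nn nn.2 x⟩ with hm
  set S : N → MonoidAlgebra ℚ N := fun n => ∑ g : N, MonoidAlgebra.of ℚ N (g * n * g⁻¹) with hS
  -- the class sums are central in ℚN
  have hScomm : ∀ n : N, ∀ α, S n * α = α * S n := by
    intro n
    refine central_of_comm_of _ (fun h => ?_)
    simp only [hS]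
    rw [Finset.sum_mul, Finset.mul_sum]
    refine Fintype.sum_equiv (Equiv.mulLeft h⁻¹) _ _ (fun g => ?_)
    rw [← map_mul, ← map_mul]
    congr 1
    simp only [Equiv.coe_mulLeft]
    group
  have hcent : ∀ n : N, ∀ α, (S n * e) * α = α * (S n * e) := by
    intro n α
    calc (S n * e) * α = S n * (α * e) := by rw [mul_assoc, hPCI.1 α]
      _ = (α * S n) * e := by rw [← mul_assoc, hScomm n α]
      _ = α * (S n * e) := by rw [mul_assoc]
  -- the embedded class sums (cut by e) lie in the centre of the component
  have hmem : ∀ n : N, emb N (S n) * emb N e ∈ centerCompNUS N (emb N e) := by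
    intro n
    refine ⟨NonUnitalSubring.subset_closure ⟨S n, rfl⟩, ?_⟩
    intro γ hγ
    have hγ' : γ ∈ NonUnitalSubring.closure
        (Set.range fun β : MonoidAlgebra ℚ N => emb N β * emb N e) := hγ
    clear hγ
    induction hγ' using NonUnitalSubring.closure_induction with
    | mem y hy =>
      obtain ⟨β, rfl⟩ := hy
      simp only [← map_mul]
      rw [hcent n (β * e)]
    | zero => rw [mul_zero, zero_mul]
    | add y z hy hz ihy ihz => rw [mul_add, add_mul, ihy, ihz]
    | neg y hy ihy => rw [mul_neg, neg_mul, ihy]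
    | mul y z hy hz ihy ihz => rw [← mul_assoc, ihy, mul_assoc, ihz, ← mul_assoc]
  -- conjugation by x fixes `emb N e`
  have hconjE : conjEl x (emb N e) = emb N e := by
    unfold conjEl
    rw [hx, mul_assoc, ← map_mul, mul_inv_cancel, map_one, mul_one]
  have embof : ∀ a : N, emb N (MonoidAlgebra.of ℚ N a) = MonoidAlgebra.of ℚ C (a : C) := by
    intro a
    simp [emb, MonoidAlgebra.mapDomainRingHom_apply, MonoidAlgebra.of_apply,
      Finsupp.mapDomain_single]
  have hinj : Function.Injective (emb (G := C) N) := by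
    intro a b hab
    have h2 : MonoidAlgebra.mapDomain (N.subtype) a = MonoidAlgebra.mapDomain (N.subtype) b := by
      simpa [emb, MonoidAlgebra.mapDomainRingHom_apply] using hab
    exact MonoidAlgebra.mapDomain_injective (N.subtype_injective) h2
  -- conjugation by x sends the class sum of nn to the class sum of m
  have hSconj : conjEl x (emb N (S nn)) = emb N (S m) := by
    simp only [hS]
    unfold conjEl
    rw [map_sum, map_sum, Finset.mul_sum, Finset.sum_mul]
    refine Fintype.sum_equiv (conjEquiv N x⁻¹
      (fun a ha => by simpa using hN.conj_mem a ha x)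
      (fun a ha => hN.conj_mem a ha x⁻¹)) _ _ (fun g => ?_)
    rw [embof, embof, ← map_mul, ← map_mul]
    congr 1
    simp only [conjEquiv, Equiv.coe_fn_mk, hm, inv_inv]
    push_cast
    group
  have h1 := hfix _ (hmem nn)
  rw [conjEl_mul, hSconj, hconjE] at h1
  have heq2 : S m * e = S nn * e := by
    apply hinj
    rw [map_mul, map_mul]
    exact h1
  have hext := congrArg (extChar χ) heq2
  rw [hmulE (S m), hmulE (S nn)] at hext
  have hval : ∀ n : N, extChar χ (S n) = (Fintype.card N : ℂ) * χ n := by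
    intro n
    simp only [hS]
    rw [extChar_sum]
    obtain ⟨V, hsimp, hchar⟩ := hχ
    have hterm : ∀ g : N, extChar χ (MonoidAlgebra.of ℚ N (g * n * g⁻¹)) = χ n := by
      intro g
      rw [extChar_of, ← hchar]
      exact FDRep.char_conj V n g
    rw [Finset.sum_congr rfl (fun g _ => hterm g), Finset.sum_const, Finset.card_univ,
      nsmul_eq_mul]
  rw [hval m, hval nn] at hext
  exact mul_left_cancel₀ (Nat.cast_ne_zero.mpr Fintype.card_ne_zero) hext


end PaperGSM
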